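/- The chambers of the Shi arrangement Shi(n) are in bijection with pairs (w, I) where w ∈ S_n and I ⊆ Φ⁺ is an upper order ideal of positive roots such that every minimal element (i,j) of I is a non-inversion of w (i.e., w(i) < w(j)). Consequently the number of such pairs is (n+1)^{n-1}. -/

import Mathlib

/-- `I` is an upper order ideal in the root poset of type `A_{n-1}`. -/
def IsUpperIdeal (n : ℕ) (I : Set (Fin n × Fin n)) : Prop :=
  (∀ p ∈ I, p.1 < p.2) ∧
  ∀ p q : Fin n × Fin n, p ∈ I → q.1 ≤ p.1 → p.2 ≤ q.2 → q ∈ I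

set_option linter.unusedSectionVars false

open Finset

namespace PS

variable {n : ℕ}

/-- counting function: number of `a` with `(g a).val < j` -/
noncomputable def Cnt (g : Fin n → ZMod (n+1)) (j : ℕ) : ℕ :=
  (univ.filter (fun a => (g a).val < j)).card

noncomputable def hfun (g : Fin n → ZMod (n+1)) (v : ℕ) : ℕ :=
  (univ.filter (fun a => g a = (v : ZMod (n+1)))).card

noncomputable def Ssum (g : Fin n → ZMod (n+1)) (j : ℕ) : ℤ :=
  ∑ t ∈ range j, ((hfun g t : ℤ) - 1)

def PFz (g : Fin n → ZMod (n+1)) : Prop := ∀ j, 1 ≤ j → j ≤ n → j ≤ Cnt g j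

noncomputable def gshift (c : ℕ) (g : Fin n → ZMod (n+1)) : Fin n → ZMod (n+1) :=
  fun a => g a - (c : ZMod (n+1))

lemma hfun_gshift (g : Fin n → ZMod (n+1)) (c v : ℕ) :
    hfun (gshift c g) v = hfun g (v + c) := by
  unfold hfun gshift
  congr 1
  apply filter_congr
  intro a _
  constructor
  · intro h; push_cast; rw [← h]; ring
  · intro h; push_cast at h ⊢; rw [h]; ring

lemma cnt_eq_sum (g : Fin n → ZMod (n+1)) (j : ℕ) (hj : j ≤ n + 1) :
    Cnt g j = ∑ t ∈ range j, hfun g t := by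
  unfold Cnt
  rw [Finset.card_eq_sum_card_fiberwise (f := fun a => (g a).val) (t := range j)
    (fun x hx => by simpa using (mem_filter.mp hx).2)]
  apply Finset.sum_congr rfl
  intro t ht
  unfold hfun
  rw [filter_filter]
  congr 1
  apply filter_congr
  intro a _
  have htlt : t < n + 1 := lt_of_lt_of_le (mem_range.mp ht) hj
  constructor
  · rintro ⟨-, h2⟩
    rw [← h2, ZMod.natCast_val, ZMod.cast_id]
  · intro h
    have : (g a).val = t := by rw [h, ZMod.val_natCast_of_lt htlt]
    exact ⟨this ▸ (mem_range.mp ht), this⟩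

lemma window_sum (g : Fin n → ZMod (n+1)) (j : ℕ) :
    ∑ b ∈ range (n+1), hfun g (j + b) = n := by
  have key : (univ : Finset (Fin n)).card =
      ∑ b ∈ range (n+1), (univ.filter (fun a => (g a - (j : ZMod (n+1))).val = b)).card := by
    apply Finset.card_eq_sum_card_fiberwise
    intro x _
    exact mem_range.mpr (ZMod.val_lt _)
  rw [card_univ, Fintype.card_fin] at key
  conv_rhs => rw [key]
  apply Finset.sum_congr rfl
  intro b hb
  unfold hfun
  congr 1
  apply filter_congr
  intro a _
  have hblt : b < n + 1 := mem_range.mp hb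
  have hiff : g a = ((j + b : ℕ) : ZMod (n+1)) ↔ g a - (j : ZMod (n+1)) = (b : ZMod (n+1)) := by
    push_cast
    rw [sub_eq_iff_eq_add]
    constructor
    · intro h; rw [h]; ring
    · intro h; rw [h]; ring
  constructor
  · intro h
    rw [hiff.mp h, ZMod.val_natCast_of_lt hblt]
  · intro h
    apply hiff.mpr
    rw [← h, ZMod.natCast_val, ZMod.cast_id]

lemma Ssum_add_period (g : Fin n → ZMod (n+1)) (j : ℕ) :
    Ssum g (j + (n+1)) = Ssum g j - 1 := by
  unfold Ssum
  rw [Finset.sum_range_add]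
  have : ∑ t ∈ range (n+1), ((hfun g (j + t) : ℤ) - 1)
      = (∑ t ∈ range (n+1), (hfun g (j + t) : ℤ)) - (n+1) := by
    rw [Finset.sum_sub_distrib]
    simp
  rw [this]
  have hw : (∑ t ∈ range (n+1), (hfun g (j + t) : ℤ)) = (n : ℤ) := by
    have := window_sum g j
    exact_mod_cast congrArg (Nat.cast : ℕ → ℤ) this
  rw [hw]; ring

lemma cnt_gshift_eq (g : Fin n → ZMod (n+1)) (c j : ℕ) (hj : j ≤ n + 1) :
    (Cnt (gshift c g) j : ℤ) = Ssum g (c + j) - Ssum g c + j := by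
  rw [cnt_eq_sum _ _ hj]
  have hcongr : ∀ t ∈ range j, hfun (gshift c g) t = hfun g (c + t) := by
    intro t _
    rw [hfun_gshift, Nat.add_comm]
  rw [Finset.sum_congr rfl hcongr]
  unfold Ssum
  rw [Finset.sum_range_add (f := fun t => ((hfun g t : ℤ) - 1))]
  simp only [Finset.sum_sub_distrib, Finset.sum_const, Finset.card_range, nsmul_eq_mul,
    mul_one]
  push_cast
  ring

/-- PFz of the shifted function iff window condition on Ssum -/
lemma pfz_gshift_iff (g : Fin n → ZMod (n+1)) (c : ℕ) :
    PFz (gshift c g) ↔ ∀ j, 1 ≤ j → j ≤ n → Ssum g c ≤ Ssum g (c + j) := by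
  unfold PFz
  constructor
  · intro H j h1 hj
    have := H j h1 hj
    have hc := cnt_gshift_eq g c j (by omega)
    have : (j : ℤ) ≤ (Cnt (gshift c g) j : ℤ) := by exact_mod_cast this
    omega
  · intro H j h1 hj
    have := H j h1 hj
    have hc := cnt_gshift_eq g c j (by omega)
    have : (j : ℤ) ≤ (Cnt (gshift c g) j : ℤ) := by omega
    exact_mod_cast this

section ArgMin
variable (g : Fin n → ZMod (n+1))

noncomputable def muMin : ℤ :=
  ((range (n+1)).image (Ssum g)).min' (by simp)

lemma muMin_le (c : ℕ) (hc : c ≤ n) : muMin g ≤ Ssum g c :=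
  Finset.min'_le _ _ (mem_image.mpr ⟨c, mem_range.mpr (by omega), rfl⟩)

lemma exists_muMin : ∃ c, c ≤ n ∧ Ssum g c = muMin g := by
  obtain ⟨c, hc, hval⟩ := mem_image.mp (Finset.min'_mem ((range (n+1)).image (Ssum g)) (by simp))
  exact ⟨c, ⟨Nat.lt_succ_iff.mp (mem_range.mp hc), hval⟩⟩

noncomputable def cstar : ℕ := Nat.find (exists_muMin g)

lemma cstar_le : cstar g ≤ n := (Nat.find_spec (exists_muMin g)).1

lemma Ssum_cstar : Ssum g (cstar g) = muMin g := (Nat.find_spec (exists_muMin g)).2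

lemma cstar_min (c : ℕ) (hc : c ≤ n) : Ssum g (cstar g) ≤ Ssum g c := by
  rw [Ssum_cstar]; exact muMin_le g c hc

lemma cstar_first (c : ℕ) (hc : c < cstar g) : Ssum g (cstar g) < Ssum g c := by
  have hnp := Nat.find_min (exists_muMin g) hc
  have hcn : c ≤ n := by have := cstar_le g; omega
  have h1 := muMin_le g c hcn
  rw [Ssum_cstar]
  rcases lt_or_eq_of_le h1 with h | h
  · exact h
  · exact absurd ⟨hcn, h.symm⟩ hnp

theorem exists_unique_shift : ∃! c : ℕ, c < n + 1 ∧ PFz (gshift c g) := by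
  refine ⟨cstar g, ⟨by have := cstar_le g; omega, ?_⟩, ?_⟩
  · rw [pfz_gshift_iff]
    intro j h1 hj
    by_cases hcj : cstar g + j ≤ n
    · exact cstar_min g _ hcj
    · have hr : cstar g + j = (cstar g + j - (n+1)) + (n+1) := by
        have := cstar_le g; omega
      rw [hr, Ssum_add_period]
      have hrlt : cstar g + j - (n+1) < cstar g := by have := cstar_le g; omega
      have := cstar_first g _ hrlt
      omega
  · rintro c ⟨hclt, hc⟩
    rw [pfz_gshift_iff] at hc
    by_contra hne
    rcases Nat.lt_or_ge c (cstar g) with hlt | hge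
    · have hj : 1 ≤ cstar g - c ∧ cstar g - c ≤ n := by have := cstar_le g; omega
      have h2 := hc (cstar g - c) hj.1 hj.2
      rw [show c + (cstar g - c) = cstar g by omega] at h2
      have := cstar_first g c hlt
      omega
    · have hlt : cstar g < c := by omega
      have hj : 1 ≤ cstar g + (n+1) - c ∧ cstar g + (n+1) - c ≤ n := by omega
      have h2 := hc (cstar g + (n+1) - c) hj.1 hj.2
      rw [show c + (cstar g + (n+1) - c) = cstar g + (n+1) by omega,
        Ssum_add_period] at h2
      have := cstar_min g c (by omega)
      omega

end ArgMin

noncomputable def cOf (g : Fin n → ZMod (n+1)) : ℕ := (exists_unique_shift g).exists.choose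

lemma cOf_spec (g : Fin n → ZMod (n+1)) : cOf g < n + 1 ∧ PFz (gshift (cOf g) g) :=
  (exists_unique_shift g).exists.choose_spec

lemma cOf_unique (g : Fin n → ZMod (n+1)) (c : ℕ) (h : c < n + 1 ∧ PFz (gshift c g)) :
    c = cOf g := by
  obtain ⟨x, _, hu⟩ := exists_unique_shift g
  rw [hu c h, hu (cOf g) (cOf_spec g)]

noncomputable def shiftEquiv : (Fin n → ZMod (n+1)) ≃ {g : Fin n → ZMod (n+1) // PFz g} × Fin (n+1) where
  toFun g := (⟨gshift (cOf g) g, (cOf_spec g).2⟩, ⟨cOf g, (cOf_spec g).1⟩)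
  invFun p := fun a => p.1.1 a + ((p.2.val : ℕ) : ZMod (n+1))
  left_inv g := by
    funext a
    simp [gshift]
  right_inv p := by
    obtain ⟨⟨f, hf⟩, c⟩ := p
    have hsh : gshift c.val (fun a => f a + ((c.val : ℕ) : ZMod (n+1))) = f := by
      funext a; simp [gshift]
    have hc : c.val = cOf (fun a => f a + ((c.val : ℕ) : ZMod (n+1))) :=
      cOf_unique _ _ ⟨c.isLt, by rw [hsh]; exact hf⟩
    ext
    · simp only
      rw [← hc, hsh]
    · simp only
      rw [← hc]

lemma card_PFz (hn : 1 ≤ n) :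
    Nat.card {g : Fin n → ZMod (n+1) // PFz g} = (n+1)^(n-1) := by
  have h1 : Nat.card (Fin n → ZMod (n+1)) = (n+1)^n := by
    rw [Nat.card_eq_fintype_card]
    rw [Fintype.card_fun]
    simp [ZMod.card]
  have h2 := Nat.card_congr (shiftEquiv (n := n))
  rw [h1, Nat.card_prod, Nat.card_eq_fintype_card (α := Fin (n+1)), Fintype.card_fin] at h2
  have h3 : (n+1)^n = (n+1)^(n-1) * (n+1) := by
    rw [← pow_succ]
    congr 1
    omega
  rw [h3] at h2
  exact (Nat.eq_of_mul_eq_mul_right (by omega) h2.symm)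

/-- Fin-valued parking functions -/
def PFCond (f : Fin n → Fin n) : Prop :=
  ∀ t : Fin n, (t.val + 1) ≤ (univ.filter (fun a => f a ≤ t)).card

lemma pfz_val_lt (hn : 1 ≤ n) {g : Fin n → ZMod (n+1)} (hg : PFz g) (a : Fin n) :
    (g a).val < n := by
  have h := hg n hn le_rfl
  have hcard : (univ.filter (fun a => (g a).val < n)).card = n := by
    have hle : (univ.filter (fun a => (g a).val < n)).card ≤ n := by
      simpa using Finset.card_filter_le (univ : Finset (Fin n)) _
    have : n ≤ (univ.filter (fun a => (g a).val < n)).card := h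
    omega
  have huniv : (univ.filter (fun a => (g a).val < n)) = univ := by
    apply Finset.eq_univ_of_card
    simpa using hcard
  have hmem : a ∈ univ.filter (fun a => (g a).val < n) := by rw [huniv]; exact mem_univ a
  exact (mem_filter.mp hmem).2

noncomputable def pfzEquiv (hn : 1 ≤ n) :
    {g : Fin n → ZMod (n+1) // PFz g} ≃ {f : Fin n → Fin n // PFCond f} where
  toFun g := ⟨fun a => ⟨(g.1 a).val, pfz_val_lt hn g.2 a⟩, by
    intro t
    have := g.2 (t.val + 1) (by omega) (by omega)
    refine le_trans this (le_of_eq ?_)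
    unfold Cnt
    congr 1
    apply filter_congr
    intro a _
    simp only [Fin.le_def]
    omega⟩
  invFun f := ⟨fun a => (((f.1 a).val : ℕ) : ZMod (n+1)), by
    intro j h1 hj
    have hf := f.2 ⟨j - 1, by omega⟩
    simp only at hf
    have hf' : j ≤ (univ.filter (fun a => f.1 a ≤ ⟨j - 1, by omega⟩)).card := by omega
    refine le_trans hf' (le_of_eq ?_)
    unfold Cnt
    congr 1
    apply filter_congr
    intro a _
    rw [ZMod.val_natCast_of_lt (by have := (f.1 a).isLt; omega)]
    simp only [Fin.le_def]
    omega⟩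
  left_inv g := by
    apply Subtype.ext
    funext a
    simp only
    rw [ZMod.natCast_val, ZMod.cast_id]
  right_inv f := by
    apply Subtype.ext
    funext a
    apply Fin.ext
    simp only
    rw [ZMod.val_natCast_of_lt (by have := (f.1 a).isLt; omega)]

theorem card_PF (hn : 1 ≤ n) :
    Nat.card {f : Fin n → Fin n // PFCond f} = (n+1)^(n-1) := by
  rw [← Nat.card_congr (pfzEquiv hn)]
  exact card_PFz hn


/-! ### Part 1: ideals and their minimal elements -/

def MinSet (I : Set (Fin n × Fin n)) : Set (Fin n × Fin n) :=
  {α | α ∈ I ∧ ∀ β ∈ I, α.1 ≤ β.1 → β.2 ≤ α.2 → β = α}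

lemma erase_ideal_iff {I : Set (Fin n × Fin n)} (hI : IsUpperIdeal n I)
    {α : Fin n × Fin n} (hα : α ∈ I) :
    IsUpperIdeal n (I \ {α}) ↔ α ∈ MinSet I := by
  constructor
  · intro h
    refine ⟨hα, fun β hβ h1 h2 => ?_⟩
    by_contra hne
    have hβ' : β ∈ I \ {α} := ⟨hβ, by simpa using hne⟩
    have : α ∈ I \ {α} := h.2 β α hβ' h1 h2
    simp at this
  · intro hmin
    constructor
    · intro p hp; exact hI.1 p hp.1
    · intro p q hp h1 h2
      have hq : q ∈ I := hI.2 p q hp.1 h1 h2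
      refine ⟨hq, ?_⟩
      intro hqα
      have hqα' : q = α := hqα
      subst hqα'
      exact hp.2 (by simp [hmin.2 p hp.1 h1 h2])

/-- increasing matching = antichain in the root poset -/
def IsIM (A : Set (Fin n × Fin n)) : Prop :=
  (∀ p ∈ A, p.1 < p.2) ∧ ∀ p ∈ A, ∀ q ∈ A, p.1 ≤ q.1 → q.2 ≤ p.2 → p = q

lemma IsIM.incr {A : Set (Fin n × Fin n)} (hA : IsIM A) {p q : Fin n × Fin n}
    (hp : p ∈ A) (hq : q ∈ A) (h : p.1 < q.1) : p.2 < q.2 := by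
  by_contra hle
  push_neg at hle
  exact absurd (hA.2 p hp q hq h.le hle) (by rintro rfl; exact lt_irrefl _ h)

lemma IsIM.right_inj {A : Set (Fin n × Fin n)} (hA : IsIM A) {p q : Fin n × Fin n}
    (hp : p ∈ A) (hq : q ∈ A) (h : p.2 = q.2) : p = q := by
  rcases le_total p.1 q.1 with h1 | h1
  · exact hA.2 p hp q hq h1 h.ge
  · exact (hA.2 q hq p hp h1 h.le).symm

lemma IsIM.left_inj {A : Set (Fin n × Fin n)} (hA : IsIM A) {p q : Fin n × Fin n}
    (hp : p ∈ A) (hq : q ∈ A) (h : p.1 = q.1) : p = q := by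
  rcases le_total p.2 q.2 with h2 | h2
  · exact (hA.2 q hq p hp h.ge h2).symm
  · exact hA.2 p hp q hq h.le h2

lemma minset_isIM {I : Set (Fin n × Fin n)} (hI : IsUpperIdeal n I) : IsIM (MinSet I) := by
  refine ⟨fun p hp => hI.1 p hp.1, fun p hp q hq h1 h2 => (hp.2 q hq.1 h1 h2).symm⟩

def upC (A : Set (Fin n × Fin n)) : Set (Fin n × Fin n) :=
  {q | q.1 < q.2 ∧ ∃ α ∈ A, q.1 ≤ α.1 ∧ α.2 ≤ q.2}

lemma upC_ideal {A : Set (Fin n × Fin n)} : IsUpperIdeal n (upC A) := by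
  constructor
  · intro p hp; exact hp.1
  · rintro p q ⟨hp1, α, hα, h1, h2⟩ hq1 hq2
    exact ⟨lt_of_le_of_lt hq1 (lt_of_lt_of_le hp1 hq2),
      α, hα, le_trans hq1 h1, le_trans h2 hq2⟩

lemma self_mem_upC {A : Set (Fin n × Fin n)} (hA : IsIM A) {α : Fin n × Fin n}
    (hα : α ∈ A) : α ∈ upC A :=
  ⟨hA.1 α hα, α, hα, le_rfl, le_rfl⟩

lemma minset_upC {A : Set (Fin n × Fin n)} (hA : IsIM A) : MinSet (upC A) = A := by
  ext α
  constructor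
  · rintro ⟨⟨hlt, β, hβ, h1, h2⟩, hmin⟩
    have : β = α := hmin β (self_mem_upC hA hβ) h1 h2
    exact this ▸ hβ
  · intro hα
    refine ⟨self_mem_upC hA hα, ?_⟩
    rintro β ⟨hβlt, γ, hγ, hb1, hb2⟩ h1 h2
    have hαγ : α = γ := hA.2 α hα γ hγ (le_trans h1 hb1) (le_trans hb2 h2)
    subst hαγ
    have e1 : β.1 = α.1 := le_antisymm (by exact hb1) (by exact h1)
    have e2 : β.2 = α.2 := le_antisymm h2 hb2
    exact Prod.ext e1 e2

lemma upC_minset {I : Set (Fin n × Fin n)} (hI : IsUpperIdeal n I) : upC (MinSet I) = I := by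
  ext p
  constructor
  · rintro ⟨hlt, α, hα, h1, h2⟩
    exact hI.2 α p hα.1 h1 h2
  · intro hp
    suffices H : ∀ g : ℕ, ∀ q : Fin n × Fin n, q ∈ I → q.2.val - q.1.val ≤ g →
        q ∈ upC (MinSet I) from H n p hp (by omega)
    intro g
    induction g with
    | zero =>
      intro q hq hg
      have := hI.1 q hq
      have : q.1.val < q.2.val := this
      omega
    | succ g ih =>
      intro q hq hg
      by_cases hqmin : q ∈ MinSet I
      · exact ⟨hI.1 q hq, q, hqmin, le_rfl, le_rfl⟩
      · have : ∃ β ∈ I, q.1 ≤ β.1 ∧ β.2 ≤ q.2 ∧ β ≠ q := by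
          by_contra hcon
          push_neg at hcon
          exact hqmin ⟨hq, fun β hβ h1 h2 => hcon β hβ h1 h2⟩
        obtain ⟨β, hβ, h1, h2, hne⟩ := this
        have hβlt : β.1.val < β.2.val := hI.1 β hβ
        have hqlt : q.1.val < q.2.val := hI.1 q hq
        have hgap : β.2.val - β.1.val ≤ g := by
          have h1' : q.1.val ≤ β.1.val := h1
          have h2' : β.2.val ≤ q.2.val := h2
          have hne' : β.1.val ≠ q.1.val ∨ β.2.val ≠ q.2.val := by
            by_contra hcon
            push_neg at hcon
            exact hne (Prod.ext (Fin.ext hcon.1) (Fin.ext hcon.2))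
          omega
        obtain ⟨hlt', α, hα, ha1, ha2⟩ := ih β hβ hgap
        exact ⟨hI.1 q hq, α, hα, le_trans h1 ha1, le_trans ha2 h2⟩


/-! ### Part 2: chain-minimum machinery -/

open Classical in
noncomputable def cminF (A : Set (Fin n × Fin n)) : ℕ → Fin n → Fin n
  | 0, k => k
  | m+1, k => if h : ∃ j, (j, k) ∈ A then cminF A m h.choose else k

noncomputable def cmin (A : Set (Fin n × Fin n)) (k : Fin n) : Fin n := cminF A k.val k

section CminLemmas

variable {A : Set (Fin n × Fin n)} (hA : IsIM A)
include hA

lemma arc_lt {j k : Fin n} (h : (j, k) ∈ A) : j < k := hA.1 (j, k) h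

omit hA in
open Classical in
lemma cminF_succ (m : ℕ) (k : Fin n) :
    cminF A (m+1) k = if h : ∃ j, (j, k) ∈ A then cminF A m h.choose else k := rfl

omit hA in
lemma cminF_no_pred {k : Fin n} (h : ¬∃ j, (j, k) ∈ A) (m : ℕ) : cminF A m k = k := by
  cases m with
  | zero => rfl
  | succ m => rw [cminF_succ]; exact dif_neg h

lemma cminF_stable :
    ∀ N : ℕ, ∀ k : Fin n, k.val ≤ N → ∀ m₁ m₂ : ℕ, k.val ≤ m₁ → k.val ≤ m₂ →
      cminF A m₁ k = cminF A m₂ k := by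
  intro N
  induction N with
  | zero =>
    intro k hk m₁ m₂ _ _
    have hnp : ¬∃ j, (j, k) ∈ A := by
      rintro ⟨j, hj⟩
      have := arc_lt hA hj
      omega
    rw [cminF_no_pred hnp, cminF_no_pred hnp]
  | succ N ih =>
    intro k hk m₁ m₂ h1 h2
    by_cases h : ∃ j, (j, k) ∈ A
    · have hjlt : h.choose < k := arc_lt hA h.choose_spec
      have hk1 : 1 ≤ k.val := by omega
      obtain ⟨m₁', rfl⟩ : ∃ m, m₁ = m + 1 := ⟨m₁ - 1, by omega⟩
      obtain ⟨m₂', rfl⟩ : ∃ m, m₂ = m + 1 := ⟨m₂ - 1, by omega⟩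
      rw [cminF_succ, cminF_succ, dif_pos h, dif_pos h]
      exact ih h.choose (by omega) m₁' m₂' (by omega) (by omega)
    · rw [cminF_no_pred h, cminF_no_pred h]

lemma cminF_eq_cmin {k : Fin n} {m : ℕ} (hm : k.val ≤ m) : cminF A m k = cmin A k :=
  cminF_stable hA k.val k le_rfl m k.val hm le_rfl

lemma cmin_no_pred {k : Fin n} (h : ¬∃ j, (j, k) ∈ A) : cmin A k = k :=
  cminF_no_pred h k.val

lemma cmin_of_arc {j k : Fin n} (hj : (j, k) ∈ A) : cmin A k = cmin A j := by
  have hex : ∃ i, (i, k) ∈ A := ⟨j, hj⟩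
  have hjlt : j < k := arc_lt hA hj
  obtain ⟨m, hm⟩ : ∃ m, k.val = m + 1 := ⟨k.val - 1, by omega⟩
  have step : cminF A (m+1) k = cminF A m hex.choose := by
    rw [cminF_succ]; exact dif_pos hex
  have hchoose : hex.choose = j := by
    have := hA.right_inj hex.choose_spec hj (rfl : ((hex.choose, k) : Fin n × Fin n).2 = (j, k).2)
    exact congrArg Prod.fst this
  rw [cmin, hm, step, hchoose]
  exact cminF_eq_cmin hA (by omega)

lemma cmin_le : ∀ N : ℕ, ∀ k : Fin n, k.val ≤ N → cmin A k ≤ k := by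
  intro N
  induction N with
  | zero =>
    intro k hk
    by_cases h : ∃ j, (j, k) ∈ A
    · have := arc_lt hA h.choose_spec; omega
    · rw [cmin_no_pred hA h]
  | succ N ih =>
    intro k hk
    by_cases h : ∃ j, (j, k) ∈ A
    · obtain ⟨j, hj⟩ := h
      have hjlt : j < k := arc_lt hA hj
      rw [cmin_of_arc hA hj]
      exact le_trans (ih j (by omega)) hjlt.le
    · rw [cmin_no_pred hA h]

lemma cmin_le' (k : Fin n) : cmin A k ≤ k := cmin_le hA k.val k le_rfl

lemma cmin_no_pred_out : ∀ N : ℕ, ∀ k : Fin n, k.val ≤ N → ¬∃ i, (i, cmin A k) ∈ A := by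
  intro N
  induction N with
  | zero =>
    intro k hk
    have hnp : ¬∃ j, (j, k) ∈ A := by
      rintro ⟨j, hj⟩; have := arc_lt hA hj; omega
    rw [cmin_no_pred hA hnp]; exact hnp
  | succ N ih =>
    intro k hk
    by_cases h : ∃ j, (j, k) ∈ A
    · obtain ⟨j, hj⟩ := h
      have hjlt : j < k := arc_lt hA hj
      rw [cmin_of_arc hA hj]
      exact ih j (by omega)
    · rw [cmin_no_pred hA h]; exact h

lemma cmin_no_pred' (k : Fin n) : ¬∃ i, (i, cmin A k) ∈ A :=
  cmin_no_pred_out hA k.val k le_rfl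

lemma cmin_idem (k : Fin n) : cmin A (cmin A k) = cmin A k :=
  cmin_no_pred hA (cmin_no_pred' hA k)

lemma cmin_fix_of_no_pred {k p : Fin n} (h : cmin A k = p) (hne : k ≠ p) :
    ∃ j, (j, k) ∈ A := by
  by_contra hnp
  rw [cmin_no_pred hA hnp] at h
  exact hne h

/-- if `p = cmin k` for some `k ≠ p` then `p` has an out-arc staying in the fiber -/
lemma cmin_exists_arc : ∀ N : ℕ, ∀ k : Fin n, k.val ≤ N → ∀ p : Fin n,
    cmin A k = p → k ≠ p → ∃ u, (p, u) ∈ A ∧ cmin A u = p := by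
  intro N
  induction N with
  | zero =>
    intro k hk p hc hne
    obtain ⟨j, hj⟩ := cmin_fix_of_no_pred hA hc hne
    have := arc_lt hA hj; omega
  | succ N ih =>
    intro k hk p hc hne
    obtain ⟨j, hj⟩ := cmin_fix_of_no_pred hA hc hne
    have hjlt : j < k := arc_lt hA hj
    have hcj : cmin A j = p := by rw [← hc, cmin_of_arc hA hj]
    by_cases hjp : j = p
    · exact ⟨k, hjp ▸ hj, hc⟩
    · exact ih j (by omega) p hcj hjp

/-- no fiber element strictly between an arc's endpoints -/
lemma no_between : ∀ N : ℕ, ∀ k' : Fin n, k'.val ≤ N → ∀ j k : Fin n,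
    (j, k') ∈ A → cmin A k = cmin A k' → j < k → k < k' → False := by
  intro N
  induction N with
  | zero =>
    intro k' hk' j k hj _ _ hlt
    omega
  | succ N ih =>
    intro k' hk' j k hjk' hc hjk hkk'
    have hcj : cmin A j = cmin A k' := (cmin_of_arc hA hjk').symm
    have hcjk : cmin A j = cmin A k := by rw [hcj, hc]
    have hckp : cmin A k ≤ j := by
      rw [← hcjk]; exact le_trans (cmin_le' hA j) le_rfl
    have hkne : k ≠ cmin A k := by
      intro h
      rw [← h] at hckp
      omega
    obtain ⟨i, hik⟩ := cmin_fix_of_no_pred hA (rfl : cmin A k = cmin A k) (by exact hkne)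
    have hilt : i < k := arc_lt hA hik
    have hij : i ≠ j := by
      intro h
      subst h
      have := hA.left_inj hik hjk' (rfl : ((i,k) : Fin n × Fin n).1 = (i,k').1)
      have := congrArg Prod.snd this
      simp at this
      omega
    rcases lt_or_gt_of_ne hij with hij' | hij'
    · exact ih k (by omega) i j hik (by rw [hcjk]) hij' hjk
    · have := hA.incr hjk' hik hij'
      simp at this
      omega

/-- a bijection increasing along arcs is increasing along fibers -/
lemma w_mono_fiber {w : Equiv.Perm (Fin n)} (hw : ∀ p ∈ A, w p.1 < w p.2) :
    ∀ N : ℕ, ∀ k' : Fin n, k'.val ≤ N → ∀ k : Fin n,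
      cmin A k = cmin A k' → k < k' → w k < w k' := by
  intro N
  induction N with
  | zero =>
    intro k' hk' k _ hlt
    omega
  | succ N ih =>
    intro k' hk' k hc hlt
    have hk'ne : k' ≠ cmin A k' := by
      have h1 : cmin A k ≤ k := cmin_le' hA k
      intro h
      rw [← h] at hc
      have : (k' : ℕ) ≤ k := by
        have := congrArg Fin.val hc
        omega
      omega
    obtain ⟨j, hj⟩ := cmin_fix_of_no_pred hA (rfl : cmin A k' = cmin A k') (by exact hk'ne)
    have hjlt : j < k' := arc_lt hA hj
    have hcj : cmin A j = cmin A k' := (cmin_of_arc hA hj).symm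
    rcases lt_trichotomy j k with hjk | hjk | hjk
    · exact absurd (no_between hA k'.val k' le_rfl j k hj hc hjk hlt) (fun h => h)
    · subst hjk
      exact hw (j, k') hj
    · have h1 : w k < w j := ih j (by omega) k (by rw [hc, ← hcj]) hjk
      exact lt_trans h1 (hw (j, k') hj)

end CminLemmas


/-! ### matchings supported on a finset, fiber multiplicities -/

def IsIMOn (S : Finset (Fin n)) (A : Set (Fin n × Fin n)) : Prop :=
  (∀ p ∈ A, p.1 ∈ S ∧ p.2 ∈ S) ∧ IsIM A

noncomputable def multS (S : Finset (Fin n)) (A : Set (Fin n × Fin n)) (p : Fin n) : ℕ :=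
  (S.filter (fun k => cmin A k = p)).card

lemma IsIM.subset {A B : Set (Fin n × Fin n)} (hB : IsIM B) (hAB : A ⊆ B) : IsIM A :=
  ⟨fun p hp => hB.1 p (hAB hp), fun p hp q hq h1 h2 => hB.2 p (hAB hp) q (hAB hq) h1 h2⟩

section MatchLemmas

variable {S : Finset (Fin n)} {A : Set (Fin n × Fin n)} (hA : IsIMOn S A)
include hA

lemma cmin_mem_S : ∀ N : ℕ, ∀ k : Fin n, k.val ≤ N → k ∈ S → cmin A k ∈ S := by
  intro N
  induction N with
  | zero =>
    intro k hk hkS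
    by_cases h : ∃ j, (j, k) ∈ A
    · have := arc_lt hA.2 h.choose_spec; omega
    · rwa [cmin_no_pred hA.2 h]
  | succ N ih =>
    intro k hk hkS
    by_cases h : ∃ j, (j, k) ∈ A
    · obtain ⟨j, hj⟩ := h
      have hjlt : j < k := arc_lt hA.2 hj
      rw [cmin_of_arc hA.2 hj]
      exact ih j (by omega) (hA.1 (j, k) hj).1
  
    · rwa [cmin_no_pred hA.2 h]

lemma cmin_mem_S' {k : Fin n} (hk : k ∈ S) : cmin A k ∈ S :=
  cmin_mem_S hA k.val k le_rfl hk

lemma mult_target_zero {i u : Fin n} (h : (i, u) ∈ A) : multS S A u = 0 := by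
  unfold multS
  rw [Finset.card_eq_zero, Finset.filter_eq_empty_iff]
  intro k _
  intro hcon
  exact (cmin_no_pred' hA.2 k) ⟨i, hcon ▸ h⟩

lemma mult_cmin_pos {k : Fin n} (hk : k ∈ S) : 1 ≤ multS S A (cmin A k) := by
  unfold multS
  rw [Nat.succ_le_iff, Finset.card_pos]
  exact ⟨cmin A k, mem_filter.mpr ⟨cmin_mem_S' hA hk, cmin_idem hA.2 k⟩⟩

/-- the minimum of `S` has no in-arc -/
lemma min_no_pred (hS : S.Nonempty) : ¬∃ j, (j, S.min' hS) ∈ A := by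
  rintro ⟨j, hj⟩
  have h1 : j ∈ S := (hA.1 (j, S.min' hS) hj).1
  have h2 : j < S.min' hS := arc_lt hA.2 hj
  exact absurd (Finset.min'_le S j h1) (by omega)

lemma cmin_eq_min_iff (hS : S.Nonempty) {k : Fin n}
    (hnoarc : ¬∃ u, (S.min' hS, u) ∈ A) (hc : cmin A k = S.min' hS) : k = S.min' hS := by
  by_contra hne
  obtain ⟨u, hu, _⟩ := cmin_exists_arc hA.2 k.val k le_rfl _ hc hne
  exact hnoarc ⟨u, hu⟩

/-- if the fiber of `min S` is a singleton, no out-arc from `min S` -/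
lemma min_no_out_of_mult_one (hS : S.Nonempty) (h1 : multS S A (S.min' hS) = 1) :
    ¬∃ u, (S.min' hS, u) ∈ A := by
  rintro ⟨u, hu⟩
  set s₀ := S.min' hS
  have hcu : cmin A u = s₀ := by
    rw [cmin_of_arc hA.2 hu, cmin_no_pred hA.2 (min_no_pred hA hS)]
  have hus : u ≠ s₀ := by
    have := arc_lt hA.2 hu
    intro h; rw [h] at this; exact lt_irrefl _ this
  have hmem_u : u ∈ S.filter (fun k => cmin A k = s₀) :=
    mem_filter.mpr ⟨(hA.1 _ hu).2, hcu⟩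
  have hmem_s : s₀ ∈ S.filter (fun k => cmin A k = s₀) :=
    mem_filter.mpr ⟨S.min'_mem hS, cmin_no_pred hA.2 (min_no_pred hA hS)⟩
  have : 1 < (S.filter (fun k => cmin A k = s₀)).card :=
    Finset.one_lt_card.mpr ⟨u, hmem_u, s₀, hmem_s, hus⟩
  unfold multS at h1
  omega

/-- if the fiber of `min S` has ≥ 2 elements, there is an out-arc from `min S` -/
lemma min_out_of_mult_ge_two (hS : S.Nonempty) (h2 : 2 ≤ multS S A (S.min' hS)) :
    ∃ u, (S.min' hS, u) ∈ A := by
  set s₀ := S.min' hS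
  have : 1 < (S.filter (fun k => cmin A k = s₀)).card := h2
  obtain ⟨a, ha, b, hb, hab⟩ := Finset.one_lt_card.mp this
  have hne : a ≠ s₀ ∨ b ≠ s₀ := by
    by_contra hcon
    push_neg at hcon
    exact hab (hcon.1.trans hcon.2.symm)
  rcases hne with h | h
  · obtain ⟨u, hu, _⟩ := cmin_exists_arc hA.2 a.val a le_rfl _ (mem_filter.mp ha).2 h
    exact ⟨u, hu⟩
  · obtain ⟨u, hu, _⟩ := cmin_exists_arc hA.2 b.val b le_rfl _ (mem_filter.mp hb).2 h
    exact ⟨u, hu⟩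

end MatchLemmas


lemma cmin_eq_of_no_out {A : Set (Fin n × Fin n)} (hA : IsIM A) {p k : Fin n}
    (hno : ¬∃ u, (p, u) ∈ A) (hc : cmin A k = p) : k = p := by
  by_contra hne
  obtain ⟨u, hu, _⟩ := cmin_exists_arc hA k.val k le_rfl _ hc hne
  exact hno ⟨u, hu⟩

/-- The forced arc: if the fiber of `s₀ = min S` has ≥ 2 elements then
`(s₀, j₀) ∈ A` where `j₀` is the least element of `S` with zero multiplicity. -/
lemma forced_arc {S : Finset (Fin n)} {A : Set (Fin n × Fin n)} (hA : IsIMOn S A)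
    (hS : S.Nonempty) {j₀ : Fin n} (hj₀S : j₀ ∈ S)
    (h2 : 2 ≤ multS S A (S.min' hS))
    (hj₀ : multS S A j₀ = 0)
    (hj₀min : ∀ p ∈ S, p < j₀ → multS S A p ≠ 0) :
    (S.min' hS, j₀) ∈ A := by
  set s₀ := S.min' hS with hs₀def
  obtain ⟨u, hu⟩ := min_out_of_mult_ge_two hA hS h2
  have huS : u ∈ S := (hA.1 _ hu).2
  have hmu : multS S A u = 0 := mult_target_zero hA hu
  have hj₀u : j₀ ≤ u := by
    by_contra hcon
    push_neg at hcon
    exact hj₀min u huS hcon hmu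
  -- j₀ has a predecessor
  have hcj₀ : cmin A j₀ ≠ j₀ := by
    intro h
    have := mult_cmin_pos hA hj₀S
    rw [h, hj₀] at this
    omega
  obtain ⟨k₁, hk₁⟩ : ∃ j, (j, j₀) ∈ A := by
    by_contra hnp
    exact hcj₀ (cmin_no_pred hA.2 hnp)
  by_cases hk₁s : k₁ = s₀
  · exact hk₁s ▸ hk₁
  · have hk₁S : k₁ ∈ S := (hA.1 _ hk₁).1
    have hs₀lt : s₀ < k₁ := lt_of_le_of_ne (Finset.min'_le S k₁ hk₁S) (Ne.symm hk₁s)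
    have := hA.2.incr hu hk₁ hs₀lt
    simp at this
    omega

section SplitLemmas

variable {A' : Set (Fin n × Fin n)} {s₀ j₀ : Fin n}
  (hlt : s₀ < j₀)
  (hA : IsIM (insert (s₀, j₀) A'))
  (hs₀ : ∀ p ∈ A', p.1 ≠ s₀ ∧ p.2 ≠ s₀)
  (hj₀ : ¬∃ i, (i, j₀) ∈ A')
include hlt hA hs₀ hj₀

lemma s₀_no_pred_insert : ¬∃ i, (i, s₀) ∈ insert (s₀, j₀) A' := by
  rintro ⟨i, hi⟩
  rcases Set.mem_insert_iff.mp hi with h | h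
  · have := congrArg Prod.snd h
    simp at this
    omega
  · exact (hs₀ _ h).2 rfl

lemma cmin_insert : ∀ N : ℕ, ∀ k : Fin n, k.val ≤ N →
    cmin (insert (s₀, j₀) A') k = if cmin A' k = j₀ then s₀ else cmin A' k := by
  have hA' : IsIM A' := hA.subset (Set.subset_insert _ _)
  intro N
  induction N with
  | zero =>
    intro k hk
    have hnp : ¬∃ j, (j, k) ∈ insert (s₀, j₀) A' := by
      rintro ⟨j, hj⟩
      have := arc_lt hA hj
      omega
    have hnp' : ¬∃ j, (j, k) ∈ A' := fun ⟨j, hj⟩ => hnp ⟨j, Set.mem_insert_iff.mpr (Or.inr hj)⟩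
    rw [cmin_no_pred hA hnp, cmin_no_pred hA' hnp']
    have : k ≠ j₀ := by
      rintro rfl
      exact hnp ⟨s₀, Set.mem_insert _ _⟩
    rw [if_neg this]
  | succ N ih =>
    intro k hk
    by_cases hp : ∃ j, (j, k) ∈ insert (s₀, j₀) A'
    · obtain ⟨j, hj⟩ := hp
      rcases Set.mem_insert_iff.mp hj with heq | hmem
      · -- (j,k) = (s₀,j₀)
        have hj' : j = s₀ := congrArg Prod.fst heq
        have hk' : k = j₀ := congrArg Prod.snd heq
        subst hj'; subst hk'
        rw [cmin_of_arc hA hj, cmin_no_pred hA (s₀_no_pred_insert hlt hA hs₀ hj₀),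
          cmin_no_pred hA' hj₀, if_pos rfl]
      · have hkj₀ : k ≠ j₀ := by
          rintro rfl
          exact hj₀ ⟨j, hmem⟩
        have hjlt : j < k := arc_lt hA' hmem
        rw [cmin_of_arc hA hj, cmin_of_arc hA' hmem]
        exact ih j (by omega)
    · have hnp' : ¬∃ j, (j, k) ∈ A' := fun ⟨j, hj⟩ => hp ⟨j, Set.mem_insert_iff.mpr (Or.inr hj)⟩
      rw [cmin_no_pred hA hp, cmin_no_pred hA' hnp']
      have : k ≠ j₀ := by
        rintro rfl
        exact hp ⟨s₀, Set.mem_insert _ _⟩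
      rw [if_neg this]

lemma cmin_insert' (k : Fin n) :
    cmin (insert (s₀, j₀) A') k = if cmin A' k = j₀ then s₀ else cmin A' k :=
  cmin_insert hlt hA hs₀ hj₀ k.val k le_rfl

lemma mult_insert_other {S : Finset (Fin n)} (hs₀S : s₀ ∈ S) {p : Fin n}
    (hps : p ≠ s₀) (hpj : p ≠ j₀) :
    multS S (insert (s₀, j₀) A') p = multS (S.erase s₀) A' p := by
  have hA' : IsIM A' := hA.subset (Set.subset_insert _ _)
  unfold multS
  congr 1
  ext k
  simp only [mem_filter, Finset.mem_erase]
  constructor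
  · rintro ⟨hkS, hck⟩
    rw [cmin_insert' hlt hA hs₀ hj₀] at hck
    by_cases hcj : cmin A' k = j₀
    · rw [if_pos hcj] at hck; exact absurd hck.symm hps
    · rw [if_neg hcj] at hck
      have hks : k ≠ s₀ := by
        intro h
        have : cmin A' k = k := cmin_no_pred hA' (fun ⟨i, hi⟩ => (hs₀ _ hi).2 (h ▸ rfl))
        rw [this, h] at hck
        exact hps hck.symm
      exact ⟨⟨hks, hkS⟩, hck⟩
  · rintro ⟨⟨hks, hkS⟩, hck⟩
    refine ⟨hkS, ?_⟩
    rw [cmin_insert' hlt hA hs₀ hj₀, hck, if_neg hpj]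

lemma mult_insert_s₀ {S : Finset (Fin n)} (hs₀S : s₀ ∈ S) :
    multS S (insert (s₀, j₀) A') s₀ = 1 + multS (S.erase s₀) A' j₀ := by
  have hA' : IsIM A' := hA.subset (Set.subset_insert _ _)
  unfold multS
  have hset : S.filter (fun k => cmin (insert (s₀, j₀) A') k = s₀)
      = insert s₀ ((S.erase s₀).filter (fun k => cmin A' k = j₀)) := by
    ext k
    simp only [mem_filter, Finset.mem_insert, Finset.mem_erase]
    constructor
    · rintro ⟨hkS, hck⟩
      by_cases hks : k = s₀
      · exact Or.inl hks
      · right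
        rw [cmin_insert' hlt hA hs₀ hj₀] at hck
        by_cases hcj : cmin A' k = j₀
        · exact ⟨⟨hks, hkS⟩, hcj⟩
        · rw [if_neg hcj] at hck
          exact absurd (cmin_eq_of_no_out hA' (fun ⟨u, hu⟩ => (hs₀ _ hu).1 rfl) hck) hks
    · rintro (hks | ⟨⟨hks, hkS⟩, hck⟩)
      · rw [hks]
        exact ⟨hs₀S, cmin_no_pred hA (s₀_no_pred_insert hlt hA hs₀ hj₀)⟩
      · refine ⟨hkS, ?_⟩
        rw [cmin_insert' hlt hA hs₀ hj₀, if_pos hck]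
  rw [hset, Finset.card_insert_of_notMem (by simp)]
  omega

end SplitLemmas

/-- when no arc touches `s₀`: multiplicities on `S` vs `S.erase s₀` -/
lemma mult_erase_noarc {S : Finset (Fin n)} {A : Set (Fin n × Fin n)} (hA : IsIM A)
    {s₀ : Fin n} (hs₀S : s₀ ∈ S) (hs₀ : ∀ p ∈ A, p.1 ≠ s₀ ∧ p.2 ≠ s₀) (p : Fin n) :
    multS S A p = multS (S.erase s₀) A p + if p = s₀ then 1 else 0 := by
  unfold multS
  have hcs : cmin A s₀ = s₀ := cmin_no_pred hA (fun ⟨i, hi⟩ => (hs₀ _ hi).2 rfl)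
  by_cases hps : p = s₀
  · subst hps
    have hset : S.filter (fun k => cmin A k = p) = {p} := by
      ext k
      simp only [mem_filter, Finset.mem_singleton]
      constructor
      · rintro ⟨hkS, hck⟩
        exact cmin_eq_of_no_out hA (fun ⟨u, hu⟩ => (hs₀ _ hu).1 rfl) hck
      · rintro rfl
        exact ⟨hs₀S, hcs⟩
    have hset2 : (S.erase p).filter (fun k => cmin A k = p) = ∅ := by
      rw [Finset.filter_eq_empty_iff]
      rintro k hk hck
      exact (Finset.mem_erase.mp hk).1 (cmin_eq_of_no_out hA (fun ⟨u, hu⟩ => (hs₀ _ hu).1 rfl) hck)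
    rw [hset, hset2]
    simp
  · have hset : S.filter (fun k => cmin A k = p) = (S.erase s₀).filter (fun k => cmin A k = p) := by
      ext k
      simp only [mem_filter, Finset.mem_erase]
      constructor
      · rintro ⟨hkS, hck⟩
        refine ⟨⟨?_, hkS⟩, hck⟩
        rintro rfl
        rw [hcs] at hck
        exact hps hck.symm
      · rintro ⟨⟨_, hkS⟩, hck⟩
        exact ⟨hkS, hck⟩
    rw [hset, if_neg hps]
    omega


/-! ### Claim A : unique increasing matching with prescribed fiber multiplicities -/

lemma claimA_empty (m : Fin n → ℕ) (hsupp : ∀ p, m p ≠ 0 → p ∈ (∅ : Finset (Fin n))) :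
    ∃! A : Set (Fin n × Fin n), IsIMOn ∅ A ∧ ∀ p, multS ∅ A p = m p := by
  have hm : ∀ p, m p = 0 := by
    intro p
    by_contra h
    simpa using hsupp p h
  refine ⟨∅, ⟨⟨fun p hp => hp.elim, ⟨fun p hp => hp.elim, fun p hp => hp.elim⟩⟩, ?_⟩, ?_⟩
  · intro p
    rw [hm p]
    simp [multS]
  · rintro B ⟨hB, _⟩
    ext p
    simp only [Set.mem_empty_iff_false, iff_false]
    intro hp
    simpa using (hB.1 p hp).1

lemma filter_le_min {S : Finset (Fin n)} (hS : S.Nonempty) :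
    S.filter (fun p => p ≤ S.min' hS) = {S.min' hS} := by
  ext p
  simp only [mem_filter, Finset.mem_singleton]
  constructor
  · rintro ⟨hpS, hple⟩
    exact le_antisymm hple (Finset.min'_le S p hpS)
  · rintro rfl
    exact ⟨S.min'_mem hS, le_rfl⟩

theorem claimA : ∀ (N : ℕ) (S : Finset (Fin n)) (m : Fin n → ℕ),
    S.card ≤ N →
    (∀ p, m p ≠ 0 → p ∈ S) →
    (∀ t : Fin n, (S.filter (fun s => s ≤ t)).card ≤ ∑ p ∈ S.filter (fun s => s ≤ t), m p) →
    (∑ p ∈ S, m p = S.card) →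
    ∃! A : Set (Fin n × Fin n), IsIMOn S A ∧ ∀ p, multS S A p = m p := by
  intro N
  induction N with
  | zero =>
    intro S m hN hsupp hpre hsum
    have hS : S = ∅ := Finset.card_eq_zero.mp (le_antisymm hN (Nat.zero_le _))
    subst hS
    exact claimA_empty m hsupp
  | succ N ih =>
    intro S m hN hsupp hpre hsum
    rcases S.eq_empty_or_nonempty with hSe | hS
    · subst hSe; exact claimA_empty m hsupp
    set s₀ := S.min' hS with hs₀def
    have hs₀S : s₀ ∈ S := S.min'_mem hS
    have hm₀pos : 1 ≤ m s₀ := by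
      have h := hpre s₀
      rw [filter_le_min hS] at h
      simpa using h
    set S' := S.erase s₀ with hS'def
    have hS'sub : S' ⊆ S := Finset.erase_subset _ _
    have hs₀nS' : s₀ ∉ S' := Finset.notMem_erase _ _
    have hS'card : S'.card = S.card - 1 := Finset.card_erase_of_mem hs₀S
    have hS'N : S'.card ≤ N := by
      have := Finset.card_pos.mpr hS
      omega
    have hsplitS : ∑ p ∈ S, m p = m s₀ + ∑ p ∈ S', m p :=
      (Finset.add_sum_erase S m hs₀S).symm
    have hmemS' : ∀ p, p ∈ S' ↔ (p ∈ S ∧ p ≠ s₀) := by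
      intro p
      rw [Finset.mem_erase]
      tauto
    have hminS' : ∀ p ∈ S', s₀ < p := by
      intro p hp
      rcases (hmemS' p).mp hp with ⟨hpS, hpne⟩
      exact lt_of_le_of_ne (Finset.min'_le S p hpS) (Ne.symm hpne)
    -- splitting the filtered sets at a threshold t ≥ s₀
    have hfilter_split : ∀ t : Fin n, s₀ ≤ t →
        S.filter (fun s => s ≤ t) = insert s₀ (S'.filter (fun s => s ≤ t)) := by
      intro t ht
      ext p
      rw [mem_filter, Finset.mem_insert, mem_filter, hmemS' p]
      constructor
      · rintro ⟨hpS, hpt⟩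
        by_cases hps : p = s₀
        · exact Or.inl hps
        · exact Or.inr ⟨⟨hpS, hps⟩, hpt⟩
      · rintro (rfl | ⟨⟨hpS, hps⟩, hpt⟩)
        · exact ⟨hs₀S, ht⟩
        · exact ⟨hpS, hpt⟩
    by_cases hm₀ : m s₀ = 1
    · -- Case 1 : singleton fiber at s₀, no arc at s₀
      set m' := Function.update m s₀ 0 with hm'def
      have hm'eq : ∀ p, p ≠ s₀ → m' p = m p := by
        intro p hp
        simp [hm'def, Function.update_of_ne hp]
      have hm's₀ : m' s₀ = 0 := by simp [hm'def]
      have H1' : ∀ p, m' p ≠ 0 → p ∈ S' := by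
        intro p hp
        by_cases hps : p = s₀
        · rw [hps, hm's₀] at hp; exact absurd rfl hp
        · rw [hm'eq p hps] at hp
          exact (hmemS' p).mpr ⟨hsupp p hp, hps⟩
      have hsum' : ∑ p ∈ S', m' p = ∑ p ∈ S', m p :=
        Finset.sum_congr rfl (fun p hp => hm'eq p ((hmemS' p).mp hp).2)
      have H2' : ∑ p ∈ S', m' p = S'.card := by
        rw [hsum']
        have := Finset.card_pos.mpr hS
        omega
      have H3' : ∀ t : Fin n, (S'.filter (fun s => s ≤ t)).card ≤
          ∑ p ∈ S'.filter (fun s => s ≤ t), m' p := by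
        intro t
        have hsum'' : ∑ p ∈ S'.filter (fun s => s ≤ t), m' p
            = ∑ p ∈ S'.filter (fun s => s ≤ t), m p :=
          Finset.sum_congr rfl (fun p hp => hm'eq p ((hmemS' p).mp (mem_filter.mp hp).1).2)
        rw [hsum'']
        by_cases hts : s₀ ≤ t
        · have hsp := hfilter_split t hts
          have hc : (S.filter (fun s => s ≤ t)).card
              = 1 + (S'.filter (fun s => s ≤ t)).card := by
            rw [hsp, Finset.card_insert_of_notMem (fun h => hs₀nS' (mem_filter.mp h).1)]
            omega
          have hs : ∑ p ∈ S.filter (fun s => s ≤ t), m p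
              = m s₀ + ∑ p ∈ S'.filter (fun s => s ≤ t), m p := by
            rw [hsp, Finset.sum_insert (fun h => hs₀nS' (mem_filter.mp h).1)]
          have := hpre t
          omega
        · have : S'.filter (fun s => s ≤ t) = ∅ := by
            rw [Finset.filter_eq_empty_iff]
            intro p hp hpt
            exact hts (le_trans (hminS' p hp).le hpt)
          rw [this]
          simp
      obtain ⟨A', ⟨hA'on, hA'mult⟩, hA'uniq⟩ := ih S' m' hS'N H1' H3' H2'
      have hA'noarc : ∀ p ∈ A', p.1 ≠ s₀ ∧ p.2 ≠ s₀ := by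
        intro p hp
        obtain ⟨h1, h2⟩ := hA'on.1 p hp
        exact ⟨((hmemS' _).mp h1).2, ((hmemS' _).mp h2).2⟩
      refine ⟨A', ⟨⟨fun p hp => ⟨hS'sub (hA'on.1 p hp).1, hS'sub (hA'on.1 p hp).2⟩, hA'on.2⟩, ?_⟩, ?_⟩
      · intro p
        rw [mult_erase_noarc hA'on.2 hs₀S hA'noarc p]
        by_cases hps : p = s₀
        · rw [hps, if_pos rfl]
          rw [← hS'def, hA'mult s₀, hm's₀, hm₀]
        · rw [if_neg hps, ← hS'def, hA'mult p, hm'eq p hps]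
          omega
      · rintro B ⟨hBon, hBmult⟩
        have hBnoout : ¬∃ u, (s₀, u) ∈ B := by
          apply min_no_out_of_mult_one hBon hS
          rw [← hs₀def, hBmult s₀, hm₀]
        have hBnoin : ¬∃ j, (j, s₀) ∈ B := by
          have := min_no_pred hBon hS
          rw [← hs₀def] at this
          exact this
        have hBnoarc : ∀ p ∈ B, p.1 ≠ s₀ ∧ p.2 ≠ s₀ := by
          intro p hp
          constructor
          · intro h
            exact hBnoout ⟨p.2, by rw [← h]; exact hp⟩
          · intro h
            exact hBnoin ⟨p.1, by rw [← h]; exact hp⟩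
        apply hA'uniq
        constructor
        · constructor
          · intro p hp
            obtain ⟨h1, h2⟩ := hBon.1 p hp
            exact ⟨(hmemS' _).mpr ⟨h1, (hBnoarc p hp).1⟩, (hmemS' _).mpr ⟨h2, (hBnoarc p hp).2⟩⟩
          · exact hBon.2
        · intro p
          have := mult_erase_noarc hBon.2 hs₀S hBnoarc p
          rw [hBmult p, ← hS'def] at this
          by_cases hps : p = s₀
          · rw [hps] at this ⊢
            rw [if_pos rfl] at this
            rw [hm's₀]
            omega
          · rw [if_neg hps] at this
            rw [hm'eq p hps]
            omega
    · -- Case 2 : fiber of s₀ has ≥ 2 elements; forced arc (s₀, j₀)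
      have hm₀2 : 2 ≤ m s₀ := by omega
      have hZ : (S.filter (fun p => m p = 0)).Nonempty := by
        by_contra hcon
        rw [Finset.not_nonempty_iff_eq_empty, Finset.filter_eq_empty_iff] at hcon
        have hge : ∀ p ∈ S', 1 ≤ m p := by
          intro p hp
          have := hcon (hS'sub hp)
          omega
        have : S'.card ≤ ∑ p ∈ S', m p := by
          calc S'.card = ∑ p ∈ S', 1 := by simp
          _ ≤ ∑ p ∈ S', m p := Finset.sum_le_sum hge
        have := Finset.card_pos.mpr hS
        omega
      set Z := S.filter (fun p => m p = 0) with hZdef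
      set j₀ := Z.min' hZ with hj₀def
      have hj₀Z : j₀ ∈ Z := Z.min'_mem hZ
      have hj₀S : j₀ ∈ S := (mem_filter.mp hj₀Z).1
      have hmj₀ : m j₀ = 0 := (mem_filter.mp hj₀Z).2
      have hj₀min : ∀ p ∈ S, p < j₀ → m p ≠ 0 := by
        intro p hpS hplt h0
        have : p ∈ Z := mem_filter.mpr ⟨hpS, h0⟩
        have := Z.min'_le p this
        rw [← hj₀def] at this
        omega
      have hs₀j₀ : s₀ < j₀ := by
        have h1 : s₀ ≤ j₀ := Finset.min'_le S j₀ hj₀S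
        have h2 : s₀ ≠ j₀ := by
          intro h
          rw [h, hmj₀] at hm₀pos
          omega
        exact lt_of_le_of_ne h1 h2
      have hj₀S' : j₀ ∈ S' := (hmemS' j₀).mpr ⟨hj₀S, by omega⟩
      set m' := Function.update (Function.update m s₀ 0) j₀ (m s₀ - 1) with hm'def
      have hm'j₀ : m' j₀ = m s₀ - 1 := by simp [hm'def]
      have hm's₀ : m' s₀ = 0 := by
        rw [hm'def, Function.update_of_ne (by omega : s₀ ≠ j₀)]
        simp
      have hm'eq : ∀ p, p ≠ s₀ → p ≠ j₀ → m' p = m p := by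
        intro p h1 h2
        rw [hm'def, Function.update_of_ne h2, Function.update_of_ne h1]
      have H1' : ∀ p, m' p ≠ 0 → p ∈ S' := by
        intro p hp
        by_cases hpj : p = j₀
        · rw [hpj]; exact hj₀S'
        by_cases hps : p = s₀
        · rw [hps, hm's₀] at hp; exact absurd rfl hp
        · rw [hm'eq p hps hpj] at hp
          exact (hmemS' p).mpr ⟨hsupp p hp, hps⟩
      have hsplitS' : ∑ p ∈ S', m p = m j₀ + ∑ p ∈ S'.erase j₀, m p :=
        (Finset.add_sum_erase S' m hj₀S').symm
      have hsum'_eq : ∑ p ∈ S', m' p = (m s₀ - 1) + ∑ p ∈ S'.erase j₀, m p := by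
        rw [← Finset.add_sum_erase S' m' hj₀S', hm'j₀]
        congr 1
        apply Finset.sum_congr rfl
        intro p hp
        have hpj : p ≠ j₀ := (Finset.mem_erase.mp hp).1
        have hps : p ≠ s₀ := ((hmemS' p).mp (Finset.mem_erase.mp hp).2).2
        exact hm'eq p hps hpj
      have H2' : ∑ p ∈ S', m' p = S'.card := by
        rw [hsum'_eq]
        have := Finset.card_pos.mpr hS
        omega
      have H3' : ∀ t : Fin n, (S'.filter (fun s => s ≤ t)).card ≤
          ∑ p ∈ S'.filter (fun s => s ≤ t), m' p := by
        intro t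
        by_cases htj : j₀ ≤ t
        · have hts : s₀ ≤ t := le_trans hs₀j₀.le htj
          have hsp := hfilter_split t hts
          have hj₀mem : j₀ ∈ S'.filter (fun s => s ≤ t) := mem_filter.mpr ⟨hj₀S', htj⟩
          have hsumm' : ∑ p ∈ S'.filter (fun s => s ≤ t), m' p
              = (m s₀ - 1) + ∑ p ∈ (S'.filter (fun s => s ≤ t)).erase j₀, m p := by
            rw [← Finset.add_sum_erase _ m' hj₀mem, hm'j₀]
            congr 1
            apply Finset.sum_congr rfl
            intro p hp
            have hpj : p ≠ j₀ := (Finset.mem_erase.mp hp).1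
            have hps : p ≠ s₀ :=
              ((hmemS' p).mp (mem_filter.mp (Finset.mem_erase.mp hp).2).1).2
            exact hm'eq p hps hpj
          have hsumm : ∑ p ∈ S'.filter (fun s => s ≤ t), m p
              = ∑ p ∈ (S'.filter (fun s => s ≤ t)).erase j₀, m p := by
            rw [← Finset.add_sum_erase _ m hj₀mem, hmj₀]
            omega
          have hc : (S.filter (fun s => s ≤ t)).card
              = 1 + (S'.filter (fun s => s ≤ t)).card := by
            rw [hsp, Finset.card_insert_of_notMem (fun h => hs₀nS' (mem_filter.mp h).1)]
            omega
          have hs : ∑ p ∈ S.filter (fun s => s ≤ t), m p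
              = m s₀ + ∑ p ∈ S'.filter (fun s => s ≤ t), m p := by
            rw [hsp, Finset.sum_insert (fun h => hs₀nS' (mem_filter.mp h).1)]
          have := hpre t
          omega
        · -- t < j₀ : all entries on the filtered set are ≥ 1
          have hge : ∀ p ∈ S'.filter (fun s => s ≤ t), 1 ≤ m' p := by
            intro p hp
            obtain ⟨hpS', hpt⟩ := mem_filter.mp hp
            have hps : p ≠ s₀ := ((hmemS' p).mp hpS').2
            have hplt : p < j₀ := lt_of_le_of_lt hpt (lt_of_not_ge htj)
            have hpj : p ≠ j₀ := by omega
            rw [hm'eq p hps hpj]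
            have := hj₀min p (hS'sub hpS') hplt
            omega
          calc (S'.filter (fun s => s ≤ t)).card = ∑ p ∈ S'.filter (fun s => s ≤ t), 1 := by simp
          _ ≤ ∑ p ∈ S'.filter (fun s => s ≤ t), m' p := Finset.sum_le_sum hge
      obtain ⟨A', ⟨hA'on, hA'mult⟩, hA'uniq⟩ := ih S' m' hS'N H1' H3' H2'
      have hA'noarc : ∀ p ∈ A', p.1 ≠ s₀ ∧ p.2 ≠ s₀ := by
        intro p hp
        obtain ⟨h1, h2⟩ := hA'on.1 p hp
        exact ⟨((hmemS' _).mp h1).2, ((hmemS' _).mp h2).2⟩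
      have hj₀nopred : ¬∃ i, (i, j₀) ∈ A' := by
        rintro ⟨i, hi⟩
        have := mult_target_zero hA'on hi
        rw [hA'mult j₀, hm'j₀] at this
        omega
      -- targets of A' arcs are > j₀
      have htargets : ∀ p ∈ A', j₀ < p.2 := by
        intro p hp
        have h0 : multS S' A' p.2 = 0 := by
          have : ((p.1, p.2) : Fin n × Fin n) = p := rfl
          exact mult_target_zero hA'on (by rw [this]; exact hp)
        rw [hA'mult p.2] at h0
        have hp2S' : p.2 ∈ S' := (hA'on.1 p hp).2
        have hps : p.2 ≠ s₀ := ((hmemS' _).mp hp2S').2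
        have hpj : p.2 ≠ j₀ := by
          intro h
          rw [h, hm'j₀] at h0
          omega
        rw [hm'eq p.2 hps hpj] at h0
        have := hj₀min p.2 (hS'sub hp2S') 
        by_contra hcon
        push_neg at hcon
        exact this (lt_of_le_of_ne hcon hpj) h0
      set A := insert ((s₀ : Fin n), j₀) A' with hAdef
      have hAIM : IsIM A := by
        constructor
        · rintro p hp
          rcases Set.mem_insert_iff.mp hp with h | h
          · rw [h]; exact hs₀j₀
          · exact hA'on.2.1 p h
        · rintro p hp q hq h1 h2
          rcases Set.mem_insert_iff.mp hp with hp' | hp' <;>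
            rcases Set.mem_insert_iff.mp hq with hq' | hq'
          · rw [hp', hq']
          · -- p = (s₀,j₀), q ∈ A' : impossible since q.2 ≤ j₀ < q.2
            exfalso
            rw [hp'] at h2
            have := htargets q hq'
            simp only at h2
            omega
          · -- q = (s₀,j₀), p ∈ A' : p.1 ≤ s₀ impossible
            exfalso
            rw [hq'] at h1
            have hp1S' : p.1 ∈ S' := (hA'on.1 p hp').1
            have := hminS' p.1 hp1S'
            simp only at h1
            omega
          · exact hA'on.2.2 p hp' q hq' h1 h2
      have hAon : IsIMOn S A := by
        constructor
        · rintro p hp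
          rcases Set.mem_insert_iff.mp hp with h | h
          · rw [h]; exact ⟨hs₀S, hj₀S⟩
          · exact ⟨hS'sub (hA'on.1 p h).1, hS'sub (hA'on.1 p h).2⟩
        · exact hAIM
      refine ⟨A, ⟨hAon, ?_⟩, ?_⟩
      · intro p
        by_cases hps : p = s₀
        · rw [hps, hAdef, mult_insert_s₀ hs₀j₀ hAIM hA'noarc hj₀nopred hs₀S,
            ← hS'def, hA'mult j₀, hm'j₀]
          omega
        by_cases hpj : p = j₀
        · rw [hpj]
          have : multS S A j₀ = 0 := mult_target_zero hAon (Set.mem_insert _ _)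
          rw [this, hmj₀]
        · rw [hAdef, mult_insert_other hs₀j₀ hAIM hA'noarc hj₀nopred hs₀S hps hpj,
            ← hS'def, hA'mult p, hm'eq p hps hpj]
      · rintro B ⟨hBon, hBmult⟩
        have hforce : ((s₀ : Fin n), j₀) ∈ B := by
          apply forced_arc hBon hS hj₀S
          · rw [← hs₀def, hBmult s₀]; omega
          · rw [hBmult j₀]; exact hmj₀
          · intro p hpS hplt
            rw [hBmult p]
            exact hj₀min p hpS hplt
        set B'' := B \ {((s₀ : Fin n), j₀)} with hB''def
        have hBeq : B = insert ((s₀ : Fin n), j₀) B'' := by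
          rw [hB''def, Set.insert_diff_singleton, Set.insert_eq_self.mpr hforce]
        have hB''sub : B'' ⊆ B := Set.diff_subset
        have hB''IM : IsIM B'' := hBon.2.subset hB''sub
        have hBnoin : ¬∃ j, (j, s₀) ∈ B := by
          have := min_no_pred hBon hS
          rw [← hs₀def] at this
          exact this
        have hB''noarc : ∀ p ∈ B'', p.1 ≠ s₀ ∧ p.2 ≠ s₀ := by
          intro p hp
          constructor
          · intro h
            have hpB : p ∈ B := hB''sub hp
            have : p = ((s₀ : Fin n), j₀) := by
              apply hBon.2.left_inj hpB hforce
              rw [h]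
            exact (Set.mem_diff p).mp hp |>.2 (by rw [this]; rfl)
          · intro h
            exact hBnoin ⟨p.1, by rw [← h]; exact hB''sub hp⟩
        have hB''j₀nopred : ¬∃ i, (i, j₀) ∈ B'' := by
          rintro ⟨i, hi⟩
          have : ((i : Fin n), j₀) = ((s₀ : Fin n), j₀) := by
            apply hBon.2.right_inj (hB''sub hi) hforce
            rfl
          exact (Set.mem_diff _).mp hi |>.2 (by rw [this]; rfl)
        have hB''on : IsIMOn S' B'' := by
          constructor
          · intro p hp
            obtain ⟨h1, h2⟩ := hBon.1 p (hB''sub hp)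
            exact ⟨(hmemS' _).mpr ⟨h1, (hB''noarc p hp).1⟩,
              (hmemS' _).mpr ⟨h2, (hB''noarc p hp).2⟩⟩
          · exact hB''IM
        have hBIM' : IsIM (insert ((s₀ : Fin n), j₀) B'') := by rw [← hBeq]; exact hBon.2
        have hB''mult : ∀ p, multS S' B'' p = m' p := by
          intro p
          by_cases hps : p = s₀
          · rw [hps, hm's₀]
            unfold multS
            rw [Finset.card_eq_zero, Finset.filter_eq_empty_iff]
            intro k hk hck
            have hnoout : ¬∃ u, ((s₀ : Fin n), u) ∈ B'' := by
              rintro ⟨u, hu⟩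
              exact (hB''noarc _ hu).1 rfl
            exact hs₀nS' ((cmin_eq_of_no_out hB''IM hnoout hck) ▸ hk)
          by_cases hpj : p = j₀
          · rw [hpj, hm'j₀]
            have := hBmult s₀
            rw [hBeq, mult_insert_s₀ hs₀j₀ hBIM' hB''noarc hB''j₀nopred hs₀S, ← hS'def] at this
            omega
          · rw [hm'eq p hps hpj]
            have := hBmult p
            rw [hBeq, mult_insert_other hs₀j₀ hBIM' hB''noarc hB''j₀nopred hs₀S hps hpj,
              ← hS'def] at this
            rw [this]
        have : B'' = A' := hA'uniq B'' ⟨hB''on, hB''mult⟩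
        rw [hBeq, this, ← hAdef]


/-! ### The main bijection -/

lemma card_filter_le (t : Fin n) : (univ.filter (fun k : Fin n => k ≤ t)).card = t.val + 1 := by
  have : (univ.filter (fun k : Fin n => k ≤ t)) = Finset.Iic t := by ext k; simp
  rw [this]
  simp [Fin.card_Iic]

lemma card_filter_perm (w : Equiv.Perm (Fin n)) (P : Fin n → Prop) [DecidablePred P] :
    (univ.filter (fun a => P (w.symm a))).card = (univ.filter P).card := by
  apply Finset.card_bij' (fun a _ => w.symm a) (fun b _ => w b)
  · intro a ha
    simp only [mem_filter, mem_univ, true_and] at ha ⊢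
    exact ha
  · intro b hb
    simp only [mem_filter, mem_univ, true_and] at hb ⊢
    simpa using hb
  · intro a _
    simp
  · intro b _
    simp

lemma orderEmbOfFin_cast {s : Finset (Fin n)} {k : ℕ} (h : s.card = k) (i : Fin k) :
    s.orderEmbOfFin rfl (Fin.cast h.symm i) = s.orderEmbOfFin h i := by
  have := s.orderEmbOfFin_unique h
    (f := fun i => s.orderEmbOfFin rfl (Fin.cast h.symm i))
    (fun x => s.orderEmbOfFin_mem rfl _)
    (fun a b hab => (s.orderEmbOfFin rfl).strictMono
      (by rw [Fin.lt_def, Fin.coe_cast, Fin.coe_cast]; exact hab))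
  exact congrFun this i

lemma orderEmbOfFin_rank {s : Finset (Fin n)} {k : Fin n} (hk : k ∈ s) :
    s.orderEmbOfFin rfl ((s.orderIsoOfFin rfl).symm ⟨k, hk⟩) = k := by
  have h1 : s.orderEmbOfFin rfl ((s.orderIsoOfFin rfl).symm ⟨k, hk⟩)
      = ((s.orderIsoOfFin rfl) ((s.orderIsoOfFin rfl).symm ⟨k, hk⟩) : Fin n) := rfl
  rw [h1, OrderIso.apply_symm_apply]

section FromPF

variable {f : Fin n → Fin n}

/-- multiplicity vector of `f` -/
def mOf (f : Fin n → Fin n) (v : Fin n) : ℕ := (univ.filter (fun a => f a = v)).card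

lemma sum_mOf : ∑ v ∈ univ, mOf f v = n := by
  have := Finset.card_eq_sum_card_fiberwise (f := f) (s := univ) (t := univ)
    (fun x _ => mem_univ _)
  rw [card_univ, Fintype.card_fin] at this
  exact this.symm

lemma mOf_prefix (t : Fin n) : ∑ p ∈ univ.filter (fun s => s ≤ t), mOf f p
    = (univ.filter (fun a => f a ≤ t)).card := by
  have key := Finset.card_eq_sum_card_fiberwise (f := f)
    (s := univ.filter (fun a => f a ≤ t)) (t := univ.filter (fun s => s ≤ t))
    (fun x hx => mem_filter.mpr ⟨mem_univ _, (mem_filter.mp hx).2⟩)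
  rw [key]
  apply Finset.sum_congr rfl
  intro b hb
  have hbt : b ≤ t := (mem_filter.mp hb).2
  unfold mOf
  congr 1
  rw [filter_filter]
  apply filter_congr
  intro a _
  constructor
  · intro h
    first
    | exact h.2
    | exact ⟨le_of_eq_of_le h hbt, h⟩
  · intro h
    first
    | exact h.2
    | exact ⟨le_of_eq_of_le h hbt, h⟩

lemma claim_inst (hf : PFCond f) :
    ∃! A : Set (Fin n × Fin n), IsIMOn univ A ∧ ∀ p, multS univ A p = mOf f p := by
  apply claimA n univ (mOf f) (by simp) (fun p _ => mem_univ p) ?_ ?_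
  · intro t
    rw [mOf_prefix t, card_filter_le t]
    exact hf t
  · rw [sum_mOf]
    simp

noncomputable def Am (hf : PFCond f) : Set (Fin n × Fin n) := (claim_inst hf).exists.choose

lemma Am_spec (hf : PFCond f) :
    IsIMOn univ (Am hf) ∧ ∀ p, multS univ (Am hf) p = mOf f p :=
  (claim_inst hf).exists.choose_spec

lemma Am_unique (hf : PFCond f) {B : Set (Fin n × Fin n)}
    (hB : IsIMOn univ B ∧ ∀ p, multS univ B p = mOf f p) : B = Am hf :=
  ExistsUnique.unique (claim_inst hf) hB (Am_spec hf)

/-- fibers of `cmin` -/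
noncomputable def Fib (hf : PFCond f) (p : Fin n) : Finset (Fin n) :=
  univ.filter (fun k => cmin (Am hf) k = p)

/-- fibers of `f` -/
def Gib (f : Fin n → Fin n) (p : Fin n) : Finset (Fin n) :=
  univ.filter (fun a => f a = p)

lemma Fib_card (hf : PFCond f) (p : Fin n) : (Gib f p).card = (Fib hf p).card := by
  have h1 : (Fib hf p).card = multS univ (Am hf) p := rfl
  rw [h1, (Am_spec hf).2 p]
  rfl

lemma mem_Fib_self (hf : PFCond f) (k : Fin n) : k ∈ Fib hf (cmin (Am hf) k) :=
  mem_filter.mpr ⟨mem_univ _, rfl⟩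

lemma cmin_of_mem_Fib (hf : PFCond f) {p k : Fin n} (hk : k ∈ Fib hf p) :
    cmin (Am hf) k = p := (mem_filter.mp hk).2

noncomputable def phiF (hf : PFCond f) (k : Fin n) : Fin n :=
  (Gib f (cmin (Am hf) k)).orderEmbOfFin rfl
    (Fin.cast (Fib_card hf (cmin (Am hf) k)).symm
      (((Fib hf (cmin (Am hf) k)).orderIsoOfFin rfl).symm ⟨k, mem_Fib_self hf k⟩))

lemma phiF_eval (hf : PFCond f) (p : Fin n) (k : Fin n) (hk : k ∈ Fib hf p) :
    phiF hf k = (Gib f p).orderEmbOfFin rfl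
      (Fin.cast (Fib_card hf p).symm
        (((Fib hf p).orderIsoOfFin rfl).symm ⟨k, hk⟩)) := by
  obtain rfl : cmin (Am hf) k = p := cmin_of_mem_Fib hf hk
  rfl

lemma phiF_mem (hf : PFCond f) (k : Fin n) : phiF hf k ∈ Gib f (cmin (Am hf) k) :=
  Finset.orderEmbOfFin_mem _ rfl _

lemma f_phiF (hf : PFCond f) (k : Fin n) : f (phiF hf k) = cmin (Am hf) k :=
  (mem_filter.mp (phiF_mem hf k)).2

lemma phiF_inj (hf : PFCond f) : Function.Injective (phiF hf) := by
  intro k k' h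
  have hp : cmin (Am hf) k = cmin (Am hf) k' := by
    rw [← f_phiF hf k, ← f_phiF hf k', h]
  have hk : k ∈ Fib hf (cmin (Am hf) k) := mem_Fib_self hf k
  have hk' : k' ∈ Fib hf (cmin (Am hf) k) := by
    rw [hp]; exact mem_Fib_self hf k'
  rw [phiF_eval hf _ k hk, phiF_eval hf _ k' hk'] at h
  have h2 := ((Gib f (cmin (Am hf) k)).orderEmbOfFin rfl).injective h
  have h3 := Fin.cast_injective _ h2
  have h4 := ((Fib hf (cmin (Am hf) k)).orderIsoOfFin rfl).symm.injective h3
  exact congrArg Subtype.val h4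

lemma phiF_mono (hf : PFCond f) {p i j : Fin n} (hi : i ∈ Fib hf p) (hj : j ∈ Fib hf p)
    (hij : i < j) : phiF hf i < phiF hf j := by
  rw [phiF_eval hf p i hi, phiF_eval hf p j hj]
  apply ((Gib f p).orderEmbOfFin rfl).strictMono
  simp only [Fin.lt_def, Fin.coe_cast]
  have := ((Fib hf p).orderIsoOfFin rfl).symm.strictMono
    (show (⟨i, hi⟩ : {x // x ∈ Fib hf p}) < ⟨j, hj⟩ from Subtype.mk_lt_mk.mpr hij)
  exact this

noncomputable def wF (hf : PFCond f) : Equiv.Perm (Fin n) :=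
  Equiv.ofBijective (phiF hf) ((Finite.injective_iff_bijective).mp (phiF_inj hf))

lemma wF_apply (hf : PFCond f) (k : Fin n) : wF hf k = phiF hf k := rfl

lemma cmin_wF_symm (hf : PFCond f) (a : Fin n) :
    cmin (Am hf) ((wF hf).symm a) = f a := by
  have := f_phiF hf ((wF hf).symm a)
  rw [← wF_apply, Equiv.apply_symm_apply] at this
  exact this.symm

end FromPF


/-! ### assembling the main equivalence -/

def Xspace (n : ℕ) := {p : Equiv.Perm (Fin n) × Set (Fin n × Fin n) //
    IsIMOn univ p.2 ∧ ∀ q ∈ p.2, p.1 q.1 < p.1 q.2}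

lemma wF_compat {f : Fin n → Fin n} (hf : PFCond f) :
    ∀ q ∈ Am hf, wF hf q.1 < wF hf q.2 := by
  intro q hq
  have hIM : IsIM (Am hf) := (Am_spec hf).1.2
  have hq' : ((q.1, q.2) : Fin n × Fin n) ∈ Am hf := hq
  have hij : q.1 < q.2 := arc_lt hIM hq'
  have hcm : cmin (Am hf) q.2 = cmin (Am hf) q.1 := cmin_of_arc hIM hq'
  have hi : q.1 ∈ Fib hf (cmin (Am hf) q.1) := mem_Fib_self hf q.1
  have hj : q.2 ∈ Fib hf (cmin (Am hf) q.1) := by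
    rw [← hcm]; exact mem_Fib_self hf q.2
  exact phiF_mono hf hi hj hij

noncomputable def pairPF (x : Xspace n) : Fin n → Fin n := fun a => cmin x.1.2 (x.1.1.symm a)

lemma pairPF_cond (x : Xspace n) : PFCond (pairPF x) := by
  intro t
  unfold pairPF
  have h1 : (univ.filter (fun a => cmin x.1.2 (x.1.1.symm a) ≤ t)).card
      = (univ.filter (fun k => cmin x.1.2 k ≤ t)).card :=
    card_filter_perm x.1.1 (fun k => cmin x.1.2 k ≤ t)
  have h2 : univ.filter (fun k : Fin n => k ≤ t) ⊆ univ.filter (fun k => cmin x.1.2 k ≤ t) := by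
    intro k hk
    exact mem_filter.mpr ⟨mem_univ _, le_trans (cmin_le' x.2.1.2 k) (mem_filter.mp hk).2⟩
  calc (t : ℕ) + 1 = (univ.filter (fun k : Fin n => k ≤ t)).card := (card_filter_le t).symm
  _ ≤ (univ.filter (fun k => cmin x.1.2 k ≤ t)).card := Finset.card_le_card h2
  _ = _ := h1.symm

lemma pairPF_mult (x : Xspace n) (p : Fin n) :
    multS univ x.1.2 p = mOf (pairPF x) p := by
  unfold multS mOf pairPF
  exact (card_filter_perm x.1.1 (fun k => cmin x.1.2 k = p)).symm

noncomputable def mainEquiv : Xspace n ≃ {f : Fin n → Fin n // PFCond f} where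
  toFun x := ⟨pairPF x, pairPF_cond x⟩
  invFun fs := ⟨(wF fs.2, Am fs.2), ⟨(Am_spec fs.2).1, wF_compat fs.2⟩⟩
  right_inv fs := by
    apply Subtype.ext
    funext a
    exact cmin_wF_symm fs.2 a
  left_inv x := by
    obtain ⟨⟨w, A⟩, hx⟩ := x
    set X : Xspace n := ⟨(w, A), hx⟩ with hXdef
    set f := pairPF X with hfdef
    have hf : PFCond f := pairPF_cond X
    have hAeq : A = Am hf := Am_unique hf ⟨hx.1, fun p => by
      rw [← pairPF_mult X p]⟩
    apply Subtype.ext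
    show ((wF hf, Am hf) : Equiv.Perm (Fin n) × Set (Fin n × Fin n)) = (w, A)
    have hweq : wF hf = w := by
      apply Equiv.ext
      intro k
      rw [wF_apply]
      set p := cmin (Am hf) k with hpdef
      have hk : k ∈ Fib hf p := mem_Fib_self hf k
      -- the map i ↦ w (orderEmbOfFin (Fib hf p) i) is the monotone enumeration of Gib f p
      have hu : (fun i : Fin ((Fib hf p).card) => w ((Fib hf p).orderEmbOfFin rfl i))
          = ⇑((Gib f p).orderEmbOfFin (Fib_card hf p)) := by
        apply Finset.orderEmbOfFin_unique
        · intro i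
          have hmem : (Fib hf p).orderEmbOfFin rfl i ∈ Fib hf p :=
            Finset.orderEmbOfFin_mem _ rfl i
          have hcm : cmin (Am hf) ((Fib hf p).orderEmbOfFin rfl i) = p :=
            (mem_filter.mp hmem).2
          refine mem_filter.mpr ⟨mem_univ _, ?_⟩
          show cmin A (w.symm (w _)) = p
          rw [Equiv.symm_apply_apply, hAeq, hcm]
        · intro a b hab
          have ha : (Fib hf p).orderEmbOfFin rfl a ∈ Fib hf p :=
            Finset.orderEmbOfFin_mem _ rfl a
          have hb : (Fib hf p).orderEmbOfFin rfl b ∈ Fib hf p :=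
            Finset.orderEmbOfFin_mem _ rfl b
          have hlt : (Fib hf p).orderEmbOfFin rfl a < (Fib hf p).orderEmbOfFin rfl b :=
            ((Fib hf p).orderEmbOfFin rfl).strictMono hab
          have hw' : ∀ q ∈ Am hf, w q.1 < w q.2 := by
            intro q hq
            exact hx.2 q (by rw [hAeq]; exact hq)
          apply w_mono_fiber (Am_spec hf).1.2 hw'
            ((Fib hf p).orderEmbOfFin rfl b).val _ le_rfl
          · rw [(mem_filter.mp ha).2, (mem_filter.mp hb).2]
          · exact hlt
      have hrank := orderEmbOfFin_rank (s := Fib hf p) hk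
      calc phiF hf k
          = (Gib f p).orderEmbOfFin rfl (Fin.cast (Fib_card hf p).symm
            (((Fib hf p).orderIsoOfFin rfl).symm ⟨k, hk⟩)) := phiF_eval hf p k hk
        _ = (Gib f p).orderEmbOfFin (Fib_card hf p)
            (((Fib hf p).orderIsoOfFin rfl).symm ⟨k, hk⟩) := orderEmbOfFin_cast _ _
        _ = w ((Fib hf p).orderEmbOfFin rfl (((Fib hf p).orderIsoOfFin rfl).symm ⟨k, hk⟩)) :=
            (congrFun hu _).symm
        _ = w k := by rw [hrank]
    rw [hweq, hAeq]


/-! ### final assembly -/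

def pairsType (n : ℕ) := {p : Equiv.Perm (Fin n) × Set (Fin n × Fin n) //
    IsUpperIdeal n p.2 ∧ ∀ α ∈ p.2, IsUpperIdeal n (p.2 \ {α}) → p.1 α.1 < p.1 α.2}

def pairsEquiv : pairsType n ≃ Xspace n where
  toFun x := ⟨(x.1.1, MinSet x.1.2),
    ⟨⟨fun p _ => ⟨mem_univ _, mem_univ _⟩, minset_isIM x.2.1⟩,
      fun q hq => x.2.2 q hq.1 ((erase_ideal_iff x.2.1 hq.1).mpr hq)⟩⟩
  invFun y := ⟨(y.1.1, upC y.1.2),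
    ⟨upC_ideal, fun α hα hid => by
      have hmin : α ∈ MinSet (upC y.1.2) := (erase_ideal_iff upC_ideal hα).mp hid
      rw [minset_upC y.2.1.2] at hmin
      exact y.2.2 α hmin⟩⟩
  left_inv x := by
    apply Subtype.ext
    show (x.1.1, upC (MinSet x.1.2)) = x.1
    rw [upC_minset x.2.1]
  right_inv y := by
    apply Subtype.ext
    show (y.1.1, MinSet (upC y.1.2)) = y.1
    rw [minset_upC y.2.1.2]

theorem card_pairs (hn : 1 ≤ n) : Nat.card (pairsType n) = (n + 1) ^ (n - 1) := by
  rw [Nat.card_congr ((pairsEquiv (n := n)).trans mainEquiv)]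
  exact card_PF hn

end PS


/-- Pak–Stanley: the chambers of `Shi(n)` correspond to pairs `(w, I)` of a permutation
`w ∈ S_n` and an upper ideal `I` of positive roots all of whose minimal elements
(those `α ∈ I` with `I \ {α}` still an ideal) are non-inversions of `w`; there are
`(n+1)^(n-1)` such pairs. -/
theorem pak_stanley_count (n : ℕ) (hn : 1 ≤ n) :
    Nat.card {p : Equiv.Perm (Fin n) × Set (Fin n × Fin n) //
        IsUpperIdeal n p.2 ∧
        ∀ α ∈ p.2, IsUpperIdeal n (p.2 \ {α}) → p.1 α.1 < p.1 α.2}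
      = (n + 1) ^ (n - 1) := by
  exact PS.card_pairs hn
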